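/- The function f(z) = z·ln(z) − ln Γ(z+1) on [0,∞) (with f(0)=0) is convex on (0,∞), satisfies f(0)=0, and consequently for any nonnegative reals λ₁,...,λ_d with ∑ᵢ λᵢ = n, one has ∑ᵢ f(λᵢ) ≤ f(n), i.e., ∏ᵢ λᵢ^{λᵢ}/λᵢ! ≤ n^n/n!. -/

import Mathlib

open Real Finset Set

noncomputable def gaF (z : ℝ) : ℝ := z * Real.log z - Real.log (Real.Gamma (z + 1))

/-- Gauss–Euler approximant. -/
noncomputable def gaG (n : ℕ) (z : ℝ) : ℝ :=
  z * Real.log z -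
    ((z + 1) * Real.log n + Real.log ((n.factorial : ℕ) : ℝ)
      - ∑ k ∈ Finset.range (n + 1), Real.log (z + 1 + k))

noncomputable def gaG1 (n : ℕ) (z : ℝ) : ℝ :=
  (Real.log z + 1) - Real.log n + ∑ k ∈ Finset.range (n + 1), (z + 1 + k)⁻¹

noncomputable def gaG2 (n : ℕ) (z : ℝ) : ℝ :=
  z⁻¹ - ∑ k ∈ Finset.range (n + 1), ((z + 1 + k) ^ 2)⁻¹

lemma ga_pos (n k : ℕ) {z : ℝ} (hz : 0 ≤ z) : (0:ℝ) < z + 1 + k := by positivity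

lemma hasDerivAt_gaG (n : ℕ) {z : ℝ} (hz : 0 < z) :
    HasDerivAt (gaG n) (gaG1 n z) z := by
  have h1 : HasDerivAt (fun z : ℝ => z * Real.log z) (Real.log z + 1) z :=
    Real.hasDerivAt_mul_log hz.ne'
  have h2 : HasDerivAt (fun z : ℝ => (z + 1) * Real.log n) (1 * Real.log n) z :=
    ((hasDerivAt_id z).add_const 1).mul_const _
  have h3 : ∀ k ∈ Finset.range (n + 1),
      HasDerivAt (fun z : ℝ => Real.log (z + 1 + k)) (1 / (z + 1 + k)) z := by
    intro k _
    exact (((hasDerivAt_id z).add_const 1).add_const (k:ℝ)).log (ga_pos n k hz.le).ne'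
  have hsum := HasDerivAt.fun_sum h3
  have := h1.sub ((h2.add (hasDerivAt_const z (Real.log ((n.factorial : ℕ) : ℝ)))).sub hsum)
  refine this.congr_deriv ?_
  unfold gaG1
  simp only [one_div, one_mul, add_zero]
  ring

lemma hasDerivAt_gaG1 (n : ℕ) {z : ℝ} (hz : 0 < z) :
    HasDerivAt (gaG1 n) (gaG2 n z) z := by
  have h1 : HasDerivAt (fun z : ℝ => Real.log z + 1) z⁻¹ z :=
    (Real.hasDerivAt_log hz.ne').add_const 1
  have h3 : ∀ k ∈ Finset.range (n + 1),
      HasDerivAt (fun z : ℝ => (z + 1 + k)⁻¹) (-(1:ℝ) / (z + 1 + k) ^ 2) z := by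
    intro k _
    exact (((hasDerivAt_id z).add_const 1).add_const (k:ℝ)).inv (ga_pos n k hz.le).ne'
  have hsum := HasDerivAt.fun_sum h3
  have := (h1.sub_const (Real.log n)).add hsum
  refine this.congr_deriv ?_
  unfold gaG2
  rw [Finset.sum_congr rfl (fun k _ => by rw [neg_div, one_div] : ∀ k ∈ Finset.range (n+1),
    (-(1:ℝ) / (z + 1 + k) ^ 2) = -((z + 1 + (k:ℝ)) ^ 2)⁻¹), Finset.sum_neg_distrib]
  ring

lemma sum_inv_sq_le {z : ℝ} (hz : 0 < z) (m : ℕ) :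
    ∑ k ∈ Finset.range m, ((z + 1 + k) ^ 2)⁻¹ ≤ z⁻¹ - (z + m)⁻¹ := by
  induction m with
  | zero => simp
  | succ m ih =>
    rw [Finset.sum_range_succ]
    have ha : (0:ℝ) < z + m := by positivity
    have key : ((z + 1 + m) ^ 2)⁻¹ ≤ (z + m)⁻¹ - (z + 1 + m)⁻¹ := by
      have h1 : (z + m)⁻¹ - (z + 1 + m)⁻¹ = ((z + m) * (z + 1 + m))⁻¹ := by
        field_simp
        try ring
      rw [h1]
      apply inv_anti₀ (by positivity)
      nlinarith
    have : (z + (m + 1 : ℕ))⁻¹ = (z + 1 + m)⁻¹ := by push_cast; ring_nf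
    rw [this]
    linarith
  
lemma gaG2_nonneg (n : ℕ) {z : ℝ} (hz : 0 < z) : 0 ≤ gaG2 n z := by
  have h := sum_inv_sq_le hz (n + 1)
  have h2 : (0:ℝ) ≤ (z + (n + 1 : ℕ))⁻¹ := by positivity
  unfold gaG2
  linarith

lemma gaG_convex (n : ℕ) : ConvexOn ℝ (Set.Ici (0:ℝ)) (gaG n) := by
  have hint : interior (Set.Ici (0:ℝ)) = Set.Ioi 0 := interior_Ici
  have hderiv : ∀ x ∈ Set.Ioi (0:ℝ), deriv (gaG n) x = gaG1 n x :=
    fun x hx => (hasDerivAt_gaG n hx).deriv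
  have hev : ∀ x ∈ Set.Ioi (0:ℝ), deriv (gaG n) =ᶠ[nhds x] gaG1 n := fun x hx =>
    Filter.eventually_of_mem (isOpen_Ioi.mem_nhds hx) hderiv
  apply convexOn_of_deriv2_nonneg (convex_Ici 0)
  · -- continuity
    apply ContinuousOn.sub Real.continuous_mul_log.continuousOn
    apply ContinuousOn.sub
    · exact ((continuous_id.add continuous_const).mul continuous_const).continuousOn.add
        continuousOn_const
    · apply continuousOn_finset_sum
      intro k _
      apply ContinuousOn.log
      · exact ((continuous_id.add continuous_const).add continuous_const).continuousOn
      · intro x hx; exact (ga_pos n k hx).ne'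
  · rw [hint]
    exact fun x hx => (hasDerivAt_gaG n hx).differentiableAt.differentiableWithinAt
  · rw [hint]
    intro x hx
    exact ((hasDerivAt_gaG1 n hx).differentiableAt.congr_of_eventuallyEq
      (hev x hx)).differentiableWithinAt
  · rw [hint]
    intro x hx
    have : deriv^[2] (gaG n) x = deriv (deriv (gaG n)) x := rfl
    rw [this, Filter.EventuallyEq.deriv_eq (hev x hx), (hasDerivAt_gaG1 n hx).deriv]
    exact gaG2_nonneg n hx

lemma gaG_eq (n : ℕ) (hn : 1 ≤ n) {z : ℝ} (hz : 0 ≤ z) :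
    gaG n z = z * Real.log z - Real.log (Real.GammaSeq (z + 1) n) := by
  have hn' : (0:ℝ) < n := by exact_mod_cast hn
  have hfac : (0:ℝ) < ((n.factorial : ℕ) : ℝ) := by exact_mod_cast n.factorial_pos
  have hterm : ∀ j ∈ Finset.range (n + 1), (z + 1 + (j:ℝ)) ≠ 0 :=
    fun j _ => (ga_pos n j hz).ne'
  have hprod : (∏ j ∈ Finset.range (n + 1), (z + 1 + (j:ℝ))) ≠ 0 :=
    Finset.prod_ne_zero_iff.mpr hterm
  have hrw : Real.GammaSeq (z + 1) n
      = (n:ℝ) ^ (z+1) * ((n.factorial : ℕ) : ℝ) / ∏ j ∈ Finset.range (n + 1), (z + 1 + (j:ℝ)) := rfl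
  rw [hrw, Real.log_div (by positivity) hprod,
    Real.log_mul (by positivity) hfac.ne', Real.log_rpow hn', Real.log_prod hterm]
  unfold gaG
  ring

lemma gaG_tendsto {z : ℝ} (hz : 0 ≤ z) :
    Filter.Tendsto (fun n => gaG n z) Filter.atTop (nhds (gaF z)) := by
  have hpos : 0 < Real.Gamma (z + 1) := Real.Gamma_pos_of_pos (by linarith)
  have h1 : Filter.Tendsto (fun n => Real.GammaSeq (z + 1) n) Filter.atTop
      (nhds (Real.Gamma (z + 1))) := Real.GammaSeq_tendsto_Gamma (z + 1)
  have h2 : Filter.Tendsto (fun n => Real.log (Real.GammaSeq (z + 1) n)) Filter.atTop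
      (nhds (Real.log (Real.Gamma (z + 1)))) :=
    ((Real.continuousAt_log hpos.ne').tendsto).comp h1
  have h3 := (tendsto_const_nhds (x := z * Real.log z)).sub h2
  apply h3.congr'
  filter_upwards [Filter.eventually_ge_atTop 1] with n hn
  exact (gaG_eq n hn hz).symm

lemma gaF_convex : ConvexOn ℝ (Set.Ici (0:ℝ)) gaF := by
  refine ⟨convex_Ici 0, fun x hx y hy a b ha hb hab => ?_⟩
  have hmem : (0:ℝ) ≤ a • x + b • y := by
    simp only [smul_eq_mul]
    have := mem_Ici.mp hx; have := mem_Ici.mp hy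
    positivity
  refine le_of_tendsto_of_tendsto' (gaG_tendsto hmem)
    (((gaG_tendsto hx).const_smul a).add ((gaG_tendsto hy).const_smul b)) (fun n => ?_)
  exact (gaG_convex n).2 hx hy ha hb hab

lemma gaF_zero : gaF 0 = 0 := by
  simp [gaF, Real.Gamma_one]

lemma gaF_superadd {a b : ℝ} (ha : 0 ≤ a) (hb : 0 ≤ b) :
    gaF a + gaF b ≤ gaF (a + b) := by
  rcases eq_or_lt_of_le (by linarith : (0:ℝ) ≤ a + b) with hc | hc
  · have ha0 : a = 0 := by linarith
    have hb0 : b = 0 := by linarith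
    simp [ha0, hb0, gaF_zero]
  · have key : ∀ u v : ℝ, 0 ≤ u → 0 ≤ v → u + v = a + b →
        gaF u ≤ (u / (a + b)) * gaF (a + b) := by
      intro u v hu hv huv
      have h := gaF_convex.2 (mem_Ici.mpr hc.le) (mem_Ici.mpr (le_refl (0:ℝ)))
        (div_nonneg hu hc.le) (div_nonneg hv hc.le)
        (by rw [← add_div, huv, div_self hc.ne'])
      simp only [smul_eq_mul, mul_zero, add_zero, gaF_zero] at h
      rwa [div_mul_cancel₀ _ hc.ne'] at h
    have hca := key a b ha hb rfl
    have hcb := key b a hb ha (add_comm b a)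
    have hsum : a / (a + b) + b / (a + b) = 1 := by field_simp
    calc gaF a + gaF b ≤ (a / (a + b)) * gaF (a + b) + (b / (a + b)) * gaF (a + b) := by
          linarith
      _ = gaF (a + b) := by rw [← add_mul, hsum, one_mul]

lemma gaF_sum {ι : Type*} (s : Finset ι) (lam : ι → ℝ) (h : ∀ i, 0 ≤ lam i) :
    ∑ i ∈ s, gaF (lam i) ≤ gaF (∑ i ∈ s, lam i) := by
  induction s using Finset.cons_induction with
  | empty => simp [gaF_zero]
  | cons a s has ih =>
    rw [Finset.sum_cons, Finset.sum_cons]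
    calc gaF (lam a) + ∑ i ∈ s, gaF (lam i) ≤ gaF (lam a) + gaF (∑ i ∈ s, lam i) := by
          linarith
      _ ≤ gaF (lam a + ∑ i ∈ s, lam i) :=
          gaF_superadd (h a) (Finset.sum_nonneg fun i _ => h i)

/-- `f(z) = z ln z − ln Γ(z+1)` is convex on `(0,∞)`, vanishes at `0`, and consequently
for nonnegative reals `λ₁,…,λ_d` summing to `n` one has `∑ᵢ f(λᵢ) ≤ f(n)`. -/
theorem convex_superadditive_gamma (d : ℕ) :
    (ConvexOn ℝ (Set.Ioi (0:ℝ)) (fun z : ℝ => z * Real.log z - Real.log (Real.Gamma (z + 1))))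
    ∧ ((fun z : ℝ => z * Real.log z - Real.log (Real.Gamma (z + 1))) 0 = 0)
    ∧ (∀ (n : ℝ) (lam : Fin d → ℝ), (∀ i, 0 ≤ lam i) → ∑ i, lam i = n →
        ∑ i, (lam i * Real.log (lam i) - Real.log (Real.Gamma (lam i + 1)))
          ≤ n * Real.log n - Real.log (Real.Gamma (n + 1))) := by
  refine ⟨?_, ?_, ?_⟩
  · exact gaF_convex.subset Ioi_subset_Ici_self (convex_Ioi 0)
  · simp [Real.Gamma_one]
  · intro n lam hnn hsum
    have := gaF_sum Finset.univ lam hnn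
    rw [hsum] at this
    simpa [gaF] using this
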